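/- Let q = 2^m, ξ a primitive element of 𝔽_q with ξ^∞ = 0, and α_i ∈ 𝔽_q for i ∈ {∞,0,…,q−2}. Define f : 𝔽_{q²} → 𝔽₂ by f(x) = Tr₁^m(α_i x^{q+1}) whenever x^q + x = ξ^i. If {α_i² ξ^{2i} + α_i : i ∈ {∞,0,…,q−2}} = 𝔽_q, then f is bent, i.e. |Σ_{x∈𝔽_{q²}} (−1)^{f(x)+Tr₁^{2m}(bx)}| = q for every b ∈ 𝔽_{q²}. -/
import Mathlib


open scoped Classical

/-- The absolute trace of a field of characteristic 2, as the sum of Frobenius powers. -/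
def FTr (F : Type*) [Field F] (k : ℕ) (x : F) : F :=
  ∑ i ∈ Finset.range k, x ^ 2 ^ i

/-- The additive character sign (-1)^y for y in the prime field {0,1}. -/
noncomputable def chi (F : Type*) [Field F] (y : F) : ℤ :=
  if y = 0 then 1 else -1

section helpers
variable {F : Type*} [Field F] [CharP F 2]

lemma FTr_add (k : ℕ) (x y : F) : FTr F k (x + y) = FTr F k x + FTr F k y := by
  unfold FTr
  rw [← Finset.sum_add_distrib]
  exact Finset.sum_congr rfl fun i _ => add_pow_char_pow ..

lemma FTr_sq (k : ℕ) (x : F) : (FTr F k x) ^ 2 = FTr F k (x ^ 2) := by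
  unfold FTr
  rw [sum_pow_char]
  exact Finset.sum_congr rfl fun i _ => by rw [← pow_mul, ← pow_mul, mul_comm]

lemma FTr_sq' (k : ℕ) (x : F) : (FTr F k x) ^ 2 = FTr F k x + x ^ 2 ^ k + x := by
  have h2 : ∀ a : F, a + a = 0 := fun a => CharTwo.add_self_eq_zero a
  rw [FTr_sq]
  have h1 : FTr F k (x ^ 2) + x = FTr F k x + x ^ 2 ^ k := by
    have lhs : FTr F k (x ^ 2) + x = FTr F (k + 1) x := by
      unfold FTr
      rw [Finset.sum_range_succ']
      simp only [pow_zero, pow_one]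
      congr 1
      exact Finset.sum_congr rfl fun i _ => by
        rw [← pow_mul, pow_succ, mul_comm 2 (2 ^ i), mul_comm]
    have rhs : FTr F (k + 1) x = FTr F k x + x ^ 2 ^ k := by
      unfold FTr; rw [Finset.sum_range_succ]
    rw [lhs, rhs]
  linear_combination h1 - h2 x

lemma FTr_mem (k : ℕ) (x : F) (hx : x ^ 2 ^ k = x) : FTr F k x = 0 ∨ FTr F k x = 1 := by
  have h := FTr_sq' k x
  rw [hx] at h
  have h2 : ∀ a : F, a + a = 0 := fun a => CharTwo.add_self_eq_zero a
  have ht : (FTr F k x) ^ 2 = FTr F k x := by rw [h]; linear_combination h2 x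
  have : FTr F k x * (FTr F k x - 1) = 0 := by ring_nf; linear_combination ht
  rcases mul_eq_zero.mp this with h' | h'
  · exact Or.inl h'
  · exact Or.inr (by linear_combination h')

lemma chi_add (s t : F) (hs : s = 0 ∨ s = 1) (ht : t = 0 ∨ t = 1) :
    chi F (s + t) = chi F s * chi F t := by
  have h01 : (1 : F) ≠ 0 := one_ne_zero
  have h11 : (1 : F) + 1 = 0 := CharTwo.add_self_eq_zero 1
  rcases hs with rfl | rfl <;> rcases ht with rfl | rfl <;>
    simp [chi, h01, h11]

end helpers

set_option linter.unusedSectionVars false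

section helpers2
variable {F : Type*} [Field F] [CharP F 2]

lemma FTr_two (m : ℕ) (z : F) : FTr F (2 * m) z = FTr F m z + FTr F m (z ^ 2 ^ m) := by
  unfold FTr
  rw [two_mul, Finset.sum_range_add]
  congr 1
  exact Finset.sum_congr rfl fun i _ => by
    rw [← pow_mul, ← pow_add]

lemma trace_nonvanish (m : ℕ) (hm : 1 ≤ m) (Z : Finset F) (hcard : 2 ^ m ≤ Z.card) :
    ∃ w ∈ Z, FTr F m w ≠ 0 := by
  by_contra hcon
  push_neg at hcon
  set P : Polynomial F := ∑ i ∈ Finset.range m, Polynomial.X ^ 2 ^ i with hP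
  have heval : ∀ w : F, P.eval w = FTr F m w := by
    intro w
    rw [hP, Polynomial.eval_finset_sum]
    unfold FTr
    exact Finset.sum_congr rfl fun i _ => by simp
  have hcoeff : P.coeff (2 ^ (m - 1)) = 1 := by
    rw [hP, Polynomial.finset_sum_coeff]
    have : ∀ i ∈ Finset.range m,
        (Polynomial.X ^ 2 ^ i : Polynomial F).coeff (2 ^ (m - 1)) =
          if i = m - 1 then 1 else 0 := by
      intro i _
      rw [Polynomial.coeff_X_pow]
      congr 1
      simp only [eq_iff_iff]
      constructor
      · intro h
        exact (Nat.pow_right_injective (le_refl 2) h.symm)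
      · rintro rfl; rfl
    rw [Finset.sum_congr rfl this, Finset.sum_ite_eq' (Finset.range m) (m - 1)]
    simp [Nat.sub_lt (lt_of_lt_of_le Nat.zero_lt_one hm) Nat.zero_lt_one]
  have hPne : P ≠ 0 := fun h => by simp [h] at hcoeff
  have hdeg : P.natDegree ≤ 2 ^ (m - 1) := by
    rw [hP]
    apply Polynomial.natDegree_sum_le_of_forall_le
    intro i hi
    rw [Polynomial.natDegree_X_pow]
    exact Nat.pow_le_pow_right (by norm_num) (Nat.le_sub_one_of_lt (Finset.mem_range.mp hi))
  have hsub : Z ⊆ P.roots.toFinset := by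
    intro w hw
    rw [Multiset.mem_toFinset, Polynomial.mem_roots hPne]
    rw [Polynomial.IsRoot, heval]
    exact hcon w hw
  have hle : Z.card ≤ 2 ^ (m - 1) := by
    calc Z.card ≤ P.roots.toFinset.card := Finset.card_le_card hsub
    _ ≤ Multiset.card P.roots := Multiset.toFinset_card_le _
    _ ≤ P.natDegree := Polynomial.card_roots' P
    _ ≤ 2 ^ (m - 1) := hdeg
  have : (2 : ℕ) ^ m ≤ 2 ^ (m - 1) := le_trans hcard hle
  have hlt : (2 : ℕ) ^ (m - 1) < 2 ^ m :=
    Nat.pow_lt_pow_right (by norm_num) (Nat.sub_lt (lt_of_lt_of_le Nat.zero_lt_one hm) Nat.zero_lt_one)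
  omega

lemma char_sum_zero (K : Finset F) (hK : ∀ u v, u ∈ K → v ∈ K → u + v ∈ K) (L : F → F)
    (hL : ∀ u v, L (u + v) = L u + L v) (hmem : ∀ u ∈ K, L u = 0 ∨ L u = 1)
    (u₀ : F) (h0 : u₀ ∈ K) (h1 : L u₀ = 1) :
    ∑ u ∈ K, chi F (L u) = 0 := by
  have key : ∑ u ∈ K, chi F (L u) = ∑ u ∈ K, chi F (L (u + u₀)) := by
    apply Finset.sum_nbij' (fun u => u + u₀) (fun u => u + u₀)
    · intro a ha; exact hK a u₀ ha h0
    · intro a ha; exact hK a u₀ ha h0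
    · intro a _; rw [add_assoc, CharTwo.add_self_eq_zero, add_zero]
    · intro a _; rw [add_assoc, CharTwo.add_self_eq_zero, add_zero]
    · intro a _; rw [add_assoc, CharTwo.add_self_eq_zero, add_zero]
  have flip : ∀ u ∈ K, chi F (L (u + u₀)) = -chi F (L u) := by
    intro u hu
    rw [hL, h1]
    have h10 : (1 : F) ≠ 0 := one_ne_zero
    have h11 : (1 : F) + 1 = 0 := CharTwo.add_self_eq_zero 1
    rcases hmem u hu with h | h <;> rw [h] <;> simp [chi, h10, h11]
  rw [Finset.sum_congr rfl flip, Finset.sum_neg_distrib] at key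
  linarith [key]

end helpers2

set_option maxHeartbeats 1000000 in
/-- Kasami branch functions over additive cosets: if {α_i²ξ^{2i} + α_i} = F_q then
f(x) = Tr_1^m(α_i x^{q+1}) for x^q + x = ξ^i is bent (index 0 of `Fin (2^m)` is ∞, ξ^∞ = 0). -/
theorem stmt_12 (m : ℕ) (hm : 1 ≤ m) (F : Type*) [Field F] [Fintype F]
    (hF : Fintype.card F = (2 ^ m) ^ 2)
    (ξ : F) (hξq : ξ ^ (2 ^ m) = ξ) (hξ : orderOf ξ = 2 ^ m - 1)
    (ξv : Fin (2 ^ m) → F)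
    (hξv : ∀ i, ξv i = if (i : ℕ) = 0 then 0 else ξ ^ ((i : ℕ) - 1))
    (α : Fin (2 ^ m) → F) (hα : ∀ i, (α i) ^ (2 ^ m) = α i)
    (hsurj : Set.range (fun i => (α i) ^ 2 * (ξv i) ^ 2 + α i) = {y : F | y ^ (2 ^ m) = y})
    (f : F → F)
    (hf : ∀ i, ∀ x : F, x ^ (2 ^ m) + x = ξv i → f x = FTr F m (α i * x ^ (2 ^ m + 1))) :
    ∀ b : F, |∑ x : F, chi F (f x + FTr F (2 * m) (b * x))| = (2 ^ m : ℤ) := by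
  -- characteristic 2
  have hchar : CharP F 2 := by
    obtain ⟨p, hc⟩ := CharP.exists F
    haveI := hc
    obtain ⟨n, hp, hcard⟩ := FiniteField.card F p
    have hdvd : p ∣ 2 ^ (m * 2) := by
      rw [pow_mul, ← hF, hcard]
      exact dvd_pow_self p (by positivity : (n : ℕ) ≠ 0)
    have hp2 : p = 2 :=
      (Nat.prime_dvd_prime_iff_eq hp Nat.prime_two).mp (hp.prime.dvd_of_dvd_pow hdvd)
    rwa [hp2] at hc
  haveI := hchar
  have hq2 : 2 ≤ 2 ^ m := by
    calc 2 = 2 ^ 1 := (pow_one 2).symm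
    _ ≤ 2 ^ m := Nat.pow_le_pow_right (by norm_num) hm
  have hpowF : ∀ x : F, x ^ (2 ^ m * 2 ^ m) = x := by
    intro x
    have := FiniteField.pow_card x
    rwa [hF, pow_two] at this
  have frob_add : ∀ x y : F, (x + y) ^ (2 ^ m) = x ^ (2 ^ m) + y ^ (2 ^ m) :=
    fun x y => add_pow_char_pow ..
  have h2 : ∀ a : F, a + a = 0 := fun a => CharTwo.add_self_eq_zero a
  -- the subfield K as a finset
  set K : Finset F := Finset.univ.filter (fun y => y ^ (2 ^ m) = y) with hKdef
  have hmemK : ∀ y : F, y ∈ K ↔ y ^ (2 ^ m) = y := by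
    intro y; simp [hKdef]
  have hKmul : ∀ u v : F, u ∈ K → v ∈ K → u * v ∈ K := by
    intro u v hu hv
    rw [hmemK] at *
    rw [mul_pow, hu, hv]
  have hKinv : ∀ u : F, u ∈ K → u⁻¹ ∈ K := by
    intro u hu
    rw [hmemK] at *
    rw [inv_pow, hu]
  have hKadd : ∀ u v : F, u ∈ K → v ∈ K → u + v ∈ K := by
    intro u v hu hv
    rw [hmemK] at *
    rw [frob_add, hu, hv]
  -- the additive map x ↦ x^q + x
  set φ : F → F := fun x => x ^ (2 ^ m) + x with hφdef
  have hφ_add : ∀ x y : F, φ (x + y) = φ x + φ y := by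
    intro x y
    show (x + y) ^ (2 ^ m) + (x + y) = (x ^ (2 ^ m) + x) + (y ^ (2 ^ m) + y)
    linear_combination frob_add x y
  have hφK : ∀ x : F, φ x ∈ K := by
    intro x
    rw [hmemK]
    show (x ^ (2 ^ m) + x) ^ (2 ^ m) = x ^ (2 ^ m) + x
    rw [frob_add, ← pow_mul, hpowF, add_comm]
  have hker : ∀ u : F, u ∈ K ↔ φ u = 0 := by
    intro u
    rw [hmemK]
    show u ^ (2 ^ m) = u ↔ u ^ (2 ^ m) + u = 0
    constructor
    · intro h; rw [h]; exact h2 u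
    · intro h; linear_combination h - h2 u
  -- card K ≤ q
  have hKle : K.card ≤ 2 ^ m := by
    set P2 : Polynomial F := Polynomial.X ^ (2 ^ m) - Polynomial.X with hP2
    have hdeg : P2.natDegree = 2 ^ m := by
      rw [hP2, Polynomial.natDegree_sub_eq_left_of_natDegree_lt, Polynomial.natDegree_X_pow]
      rw [Polynomial.natDegree_X_pow, Polynomial.natDegree_X]; omega
    have hP2ne : P2 ≠ 0 := by
      intro h
      rw [h, Polynomial.natDegree_zero] at hdeg; omega
    have hsub : K ⊆ P2.roots.toFinset := by
      intro y hy
      rw [hmemK] at hy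
      rw [Multiset.mem_toFinset, Polynomial.mem_roots hP2ne]
      simp [hP2, Polynomial.IsRoot, hy]
    calc K.card ≤ P2.roots.toFinset.card := Finset.card_le_card hsub
      _ ≤ Multiset.card P2.roots := Multiset.toFinset_card_le _
      _ ≤ P2.natDegree := Polynomial.card_roots' P2
      _ = 2 ^ m := hdeg
  -- fibers of φ
  have hfiber : ∀ x₀ : F, Finset.univ.filter (fun x => φ x = φ x₀) =
      K.image (fun u => x₀ + u) := by
    intro x₀
    ext x
    simp only [Finset.mem_filter, Finset.mem_univ, true_and, Finset.mem_image]
    constructor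
    · intro h
      refine ⟨x + x₀, ?_, by rw [← add_assoc, add_comm x₀ x, add_assoc, h2, add_zero]⟩
      rw [hker, hφ_add, h, h2]
    · rintro ⟨u, hu, rfl⟩
      rw [hφ_add, (hker u).mp hu, add_zero]
  have hfibcard : ∀ x₀ : F, (Finset.univ.filter (fun x => φ x = φ x₀)).card = K.card := by
    intro x₀
    rw [hfiber, Finset.card_image_of_injective _ (add_right_injective x₀)]
  -- counting
  have hcount : (Finset.univ.image φ).card * K.card = 2 ^ m * 2 ^ m := by
    have hc1 : (Finset.univ : Finset F).card =
        ∑ c ∈ Finset.univ.image φ, (Finset.univ.filter (fun x => φ x = c)).card :=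
      Finset.card_eq_sum_card_fiberwise (fun x _ => Finset.mem_image_of_mem φ (Finset.mem_univ x))
    have hc2 : ∀ c ∈ Finset.univ.image φ,
        (Finset.univ.filter (fun x => φ x = c)).card = K.card := by
      intro c hc
      obtain ⟨x₀, _, rfl⟩ := Finset.mem_image.mp hc
      exact hfibcard x₀
    rw [Finset.sum_congr rfl hc2, Finset.sum_const, smul_eq_mul] at hc1
    rw [← hc1, Finset.card_univ, hF, pow_two]
  have himsub : Finset.univ.image φ ⊆ K := by
    intro c hc
    obtain ⟨x, _, rfl⟩ := Finset.mem_image.mp hc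
    exact hφK x
  have hKcard : K.card = 2 ^ m := by
    have h1 : (Finset.univ.image φ).card ≤ K.card := Finset.card_le_card himsub
    have h2' : 2 ^ m * 2 ^ m ≤ K.card * K.card := by
      rw [← hcount]; exact Nat.mul_le_mul_right _ h1
    have h3 : 2 ^ m ≤ K.card := by
      by_contra hcon
      push_neg at hcon
      exact absurd h2' (not_le_of_gt (Nat.mul_lt_mul'' hcon hcon))
    omega
  have him : Finset.univ.image φ = K := by
    apply Finset.eq_of_subset_of_card_le himsub
    have h1 : (Finset.univ.image φ).card * (2 ^ m) = 2 ^ m * 2 ^ m := by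
      have hx := hcount; rwa [hKcard] at hx
    have himc : (Finset.univ.image φ).card = 2 ^ m :=
      Nat.eq_of_mul_eq_mul_right (by omega) h1
    exact le_of_eq (hKcard.trans himc.symm)
  -- ξv facts
  have hξne : ξ ≠ 0 := by
    intro h
    have hp := pow_orderOf_eq_one ξ
    rw [hξ, h, zero_pow (by omega)] at hp
    exact zero_ne_one hp
  have hξv_mem : ∀ i, ξv i ∈ K := by
    intro i
    rw [hmemK, hξv i]
    split
    · exact zero_pow (by positivity)
    · rw [← pow_mul, mul_comm, pow_mul, hξq]
  have hξv_inj : Function.Injective ξv := by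
    intro i j hij
    have key : ∀ k l : ℕ, k < l → l < 2 ^ m - 1 → ξ ^ k ≠ ξ ^ l := by
      intro k l hkl hl hkeq
      have hz : ξ ^ k * (ξ ^ (l - k) - 1) = 0 := by
        rw [mul_sub, mul_one, ← pow_add, Nat.add_sub_cancel' (le_of_lt hkl), hkeq, sub_self]
      rcases mul_eq_zero.mp hz with h | h
      · exact absurd h (pow_ne_zero _ hξne)
      · have h1 : ξ ^ (l - k) = 1 := by linear_combination h
        have hdvd := orderOf_dvd_of_pow_eq_one h1
        rw [hξ] at hdvd
        have := Nat.le_of_dvd (by omega) hdvd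
        omega
    rw [hξv i, hξv j] at hij
    by_cases hi : (i : ℕ) = 0 <;> by_cases hj : (j : ℕ) = 0
    · exact Fin.val_injective (by omega)
    · rw [if_pos hi, if_neg hj] at hij
      exact absurd hij.symm (pow_ne_zero _ hξne)
    · rw [if_neg hi, if_pos hj] at hij
      exact absurd hij (pow_ne_zero _ hξne)
    · rw [if_neg hi, if_neg hj] at hij
      have hi' : (i : ℕ) - 1 < 2 ^ m - 1 := by have := i.isLt; omega
      have hj' : (j : ℕ) - 1 < 2 ^ m - 1 := by have := j.isLt; omega
      have hval : (i : ℕ) - 1 = (j : ℕ) - 1 := by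
        rcases lt_trichotomy ((i:ℕ) - 1) ((j:ℕ) - 1) with h | h | h
        · exact absurd hij (key _ _ h hj')
        · exact h
        · exact absurd hij.symm (key _ _ h hi')
      exact Fin.val_injective (by omega)
  have hξvim : Finset.univ.image ξv = K := by
    apply Finset.eq_of_subset_of_card_le
    · intro c hc
      obtain ⟨i, _, rfl⟩ := Finset.mem_image.mp hc
      exact hξv_mem i
    · rw [Finset.card_image_of_injective _ hξv_inj, Finset.card_univ, Fintype.card_fin, hKcard]
  -- the function g
  set g : Fin (2 ^ m) → F := fun i => α i ^ 2 * ξv i ^ 2 + α i with hgdef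
  have hgim : Finset.univ.image g = K := by
    apply Finset.coe_injective
    rw [Finset.coe_image, Finset.coe_univ, Set.image_univ, hsurj]
    ext y
    simp [hmemK]
  have hg_inj : Function.Injective g := by
    have hcc : (Finset.univ.image g).card = (Finset.univ : Finset (Fin (2 ^ m))).card := by
      rw [hgim, hKcard, Finset.card_univ, Fintype.card_fin]
    have hinj := Finset.injOn_of_card_image_eq hcc
    intro i j hij
    exact hinj (Finset.mem_coe.mpr (Finset.mem_univ i)) (Finset.mem_coe.mpr (Finset.mem_univ j)) hij
  -- square roots of α
  set β : Fin (2 ^ m) → F := fun i => α i ^ 2 ^ (m - 1) with hβdef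
  have hβsq : ∀ i, β i ^ 2 = α i := by
    intro i
    show (α i ^ 2 ^ (m - 1)) ^ 2 = α i
    rw [← pow_mul, ← pow_succ]
    have hm1 : m - 1 + 1 = m := by omega
    rw [hm1]; exact hα i
  have hβK : ∀ i, β i ∈ K := by
    intro i
    rw [hmemK]
    show (α i ^ 2 ^ (m - 1)) ^ (2 ^ m) = α i ^ 2 ^ (m - 1)
    rw [← pow_mul, mul_comm, pow_mul, hα i]
  have hαK : ∀ i, α i ∈ K := fun i => (hmemK _).mpr (hα i)
  -- trace nonvanishing witness on K
  obtain ⟨w₀, hw₀K, hw₀⟩ := trace_nonvanish m hm K (le_of_eq hKcard.symm)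
  -- main computation
  intro b
  set B : F := b ^ (2 ^ m) + b with hBdef
  have hBK : B ∈ K := hφK b
  have hB2K : B ^ 2 ∈ K := by
    rw [hmemK] at hBK ⊢
    rw [← pow_mul, mul_comm, pow_mul, hBK]
  -- unique index i₀ with g i₀ = B²
  obtain ⟨i₀, hgi₀⟩ : ∃ i, g i = B ^ 2 := by
    have hmem : B ^ 2 ∈ Finset.univ.image g := hgim ▸ hB2K
    obtain ⟨i, _, hi⟩ := Finset.mem_image.mp hmem
    exact ⟨i, hi⟩
  have h2F : (2 : F) = 0 := CharTwo.two_eq_zero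
  set γ : Fin (2 ^ m) → F := fun i => α i * ξv i + β i + B with hγdef
  have hγK : ∀ i, γ i ∈ K := fun i =>
    hKadd _ _ (hKadd _ _ (hKmul _ _ (hαK i) (hξv_mem i)) (hβK i)) hBK
  have hγsq : ∀ i, γ i ^ 2 = g i + B ^ 2 := by
    intro i
    show (α i * ξv i + β i + B) ^ 2 = α i ^ 2 * ξv i ^ 2 + α i + B ^ 2
    have hb := hβsq i
    linear_combination hb + (α i * ξv i * β i + α i * ξv i * B + β i * B) * h2F
  have hγ0 : ∀ i, (γ i = 0 ↔ i = i₀) := by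
    intro i
    constructor
    · intro h
      apply hg_inj
      rw [hgi₀]
      have hsq : γ i ^ 2 = 0 := by rw [h]; ring
      rw [hγsq i] at hsq
      linear_combination hsq - h2 (B ^ 2)
    · intro h
      rw [h]
      have hz : γ i₀ ^ 2 = 0 := by rw [hγsq, hgi₀]; exact h2 _
      exact pow_eq_zero_iff (by norm_num : (2 : ℕ) ≠ 0) |>.mp hz
  -- fiberwise decomposition of the sum
  rw [show (∑ x : F, chi F (f x + FTr F (2 * m) (b * x))) =
      ∑ c ∈ K, ∑ x ∈ Finset.univ.filter (fun x => φ x = c),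
        chi F (f x + FTr F (2 * m) (b * x)) from
    (Finset.sum_fiberwise_of_maps_to (fun x _ => hφK x) _).symm]
  rw [← hξvim, Finset.sum_image (fun i _ j _ h => hξv_inj h)]
  -- inner sums
  have inner : ∀ i : Fin (2 ^ m), ∃ ε : ℤ, |ε| = 1 ∧
      (∑ x ∈ Finset.univ.filter (fun x => φ x = ξv i),
        chi F (f x + FTr F (2 * m) (b * x))) = if i = i₀ then ε * 2 ^ m else 0 := by
    intro i
    have hmem : ξv i ∈ Finset.univ.image φ := him ▸ hξv_mem i
    obtain ⟨x₀, _, hx₀⟩ := Finset.mem_image.mp hmem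
    refine ⟨chi F (f x₀ + FTr F (2 * m) (b * x₀)), by unfold chi; split <;> simp, ?_⟩
    have hfib := hfiber x₀
    rw [hx₀] at hfib
    rw [hfib, Finset.sum_image (fun u _ v _ h => by exact add_left_cancel h)]
    -- basic facts about x₀
    have hx₀' : x₀ ^ (2 ^ m) + x₀ = ξv i := hx₀
    have hx₀q : x₀ ^ (2 ^ m) = ξv i + x₀ := by linear_combination hx₀' - h2 x₀
    have hfx₀ : f x₀ = FTr F m (α i * x₀ ^ (2 ^ m + 1)) := hf i x₀ hx₀'
    have hx₀K : x₀ ^ (2 ^ m + 1) ∈ K := by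
      rw [hmemK, ← pow_mul]
      have he : (2 ^ m + 1) * 2 ^ m = 2 ^ m * 2 ^ m + 2 ^ m := by ring
      rw [he, pow_add, hpowF]
      ring
    have hA0K : α i * x₀ ^ (2 ^ m + 1) ∈ K := hKmul _ _ (hαK i) hx₀K
    have h01a := FTr_mem m _ ((hmemK _).mp hA0K)
    have h01b : FTr F (2 * m) (b * x₀) = 0 ∨ FTr F (2 * m) (b * x₀) = 1 := by
      apply FTr_mem
      have he : 2 ^ (2 * m) = 2 ^ m * 2 ^ m := by rw [two_mul, pow_add]
      rw [he, hpowF]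
    have hCmem : f x₀ + FTr F (2 * m) (b * x₀) = 0 ∨
        f x₀ + FTr F (2 * m) (b * x₀) = 1 := by
      rcases h01a with h | h <;> rcases h01b with h' | h'
      · left; rw [hfx₀, h, h', add_zero]
      · right; rw [hfx₀, h, h', zero_add]
      · right; rw [hfx₀, h, h', add_zero]
      · left; rw [hfx₀, h, h']; exact h2 1
    -- the per-element identity
    have hterm : ∀ u ∈ K, f (x₀ + u) + FTr F (2 * m) (b * (x₀ + u)) =
        (f x₀ + FTr F (2 * m) (b * x₀)) + FTr F m (γ i * u) := by
      intro u hu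
      have huq : u ^ (2 ^ m) = u := (hmemK u).mp hu
      have hux : (x₀ + u) ^ (2 ^ m) + (x₀ + u) = ξv i := by
        have := hφ_add x₀ u
        show φ (x₀ + u) = ξv i
        rw [hφ_add, hx₀, (hker u).mp hu, add_zero]
      have hfx : f (x₀ + u) = FTr F m (α i * (x₀ + u) ^ (2 ^ m + 1)) := hf i _ hux
      have hpow : (x₀ + u) ^ (2 ^ m + 1) = x₀ ^ (2 ^ m + 1) + ξv i * u + u ^ 2 := by
        rw [pow_succ, frob_add, huq, hx₀q, pow_succ, hx₀q]
        linear_combination (x₀ * u) * h2F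
      have hsplit : α i * (x₀ + u) ^ (2 ^ m + 1) =
          α i * x₀ ^ (2 ^ m + 1) + (α i * ξv i) * u + (β i * u) ^ 2 := by
        rw [hpow]
        linear_combination u ^ 2 * (hβsq i).symm
      have e1 : f (x₀ + u) = FTr F m (α i * x₀ ^ (2 ^ m + 1)) +
          FTr F m ((α i * ξv i) * u) + FTr F m ((β i * u) ^ 2) := by
        rw [hfx, hsplit, FTr_add, FTr_add]
      have hβuK : β i * u ∈ K := hKmul _ _ (hβK i) hu
      have e2 : FTr F m ((β i * u) ^ 2) = FTr F m (β i * u) := by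
        rw [← FTr_sq]
        rcases FTr_mem m (β i * u) ((hmemK _).mp hβuK) with h | h <;> rw [h] <;> ring
      have e3 : FTr F (2 * m) (b * (x₀ + u)) =
          FTr F (2 * m) (b * x₀) + FTr F m (B * u) := by
        rw [mul_add, FTr_add, FTr_two m (b * u)]
        congr 1
        rw [mul_pow, huq, ← FTr_add]
        congr 1
        show b * u + b ^ (2 ^ m) * u = (b ^ (2 ^ m) + b) * u
        ring
      have e4 : FTr F m ((α i * ξv i) * u) + FTr F m (β i * u) + FTr F m (B * u) =
          FTr F m (γ i * u) := by
        rw [← FTr_add, ← FTr_add]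
        congr 1
        show (α i * ξv i) * u + β i * u + B * u = (α i * ξv i + β i + B) * u
        ring
      rw [e1, e2, e3, hfx₀]
      linear_combination e4
    -- split on whether γ i vanishes
    have hsum : ∑ u ∈ K, chi F (f (x₀ + u) + FTr F (2 * m) (b * (x₀ + u))) =
        ∑ u ∈ K, chi F (f x₀ + FTr F (2 * m) (b * x₀)) * chi F (FTr F m (γ i * u)) := by
      apply Finset.sum_congr rfl
      intro u hu
      rw [hterm u hu, chi_add _ _ hCmem
        (FTr_mem m _ ((hmemK _).mp (hKmul _ _ (hγK i) hu)))]
    rw [hsum, ← Finset.mul_sum]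
    by_cases hγi : γ i = 0
    · rw [if_pos ((hγ0 i).mp hγi)]
      have hone : ∀ u ∈ K, chi F (FTr F m (γ i * u)) = 1 := by
        intro u _
        rw [hγi, zero_mul]
        have hz : FTr F m (0 : F) = 0 := by
          unfold FTr
          apply Finset.sum_eq_zero
          intro j _
          exact zero_pow (by positivity)
        rw [hz]
        simp [chi]
      rw [Finset.sum_congr rfl hone, Finset.sum_const, hKcard]
      push_cast
      ring
    · rw [if_neg (fun h => hγi ((hγ0 i).mpr h))]
      have hγne : γ i ≠ 0 := hγi
      have hu₀K : (γ i)⁻¹ * w₀ ∈ K := hKmul _ _ (hKinv _ (hγK i)) hw₀K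
      have hLu₀ : FTr F m (γ i * ((γ i)⁻¹ * w₀)) = 1 := by
        rw [← mul_assoc, mul_inv_cancel₀ hγne, one_mul]
        rcases FTr_mem m w₀ ((hmemK _).mp hw₀K) with h | h
        · exact absurd h hw₀
        · exact h
      rw [char_sum_zero K hKadd (fun u => FTr F m (γ i * u))
        (fun u v => by
          show FTr F m (γ i * (u + v)) = FTr F m (γ i * u) + FTr F m (γ i * v)
          rw [mul_add, FTr_add])
        (fun u hu => FTr_mem m _ ((hmemK _).mp (hKmul _ _ (hγK i) hu)))
        ((γ i)⁻¹ * w₀) hu₀K hLu₀, mul_zero]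
  choose ε hε1 hεv using inner
  rw [Finset.sum_congr rfl (fun i _ => hεv i)]
  rw [Finset.sum_ite_eq' Finset.univ i₀ (fun i => ε i * 2 ^ m), if_pos (Finset.mem_univ i₀)]
  rw [abs_mul, hε1 i₀, one_mul, abs_of_nonneg (by positivity : (0:ℤ) ≤ 2 ^ m)]
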